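/- For natural numbers α, and integers i, t with max(0, α+3−i) ≤ t ≤ min(2α+4−i, α+2), the sum over s from max(1, i−α−2) to min(α+2, i) of C(α+2, s)·C(α+2, i−s)·C(α+2−i+s, t) over admissible s equals C(α+2, t)·C(2α+4−t, i), where C(n,k) denotes the binomial coefficient. -/

import Mathlib

lemma aux_choose (n k t : ℕ) (hk : k ≤ n) :
    n.choose k * (n - k).choose t = n.choose t * (n - t).choose k := by
  by_cases h : t ≤ n - k
  · rw [← Nat.choose_symm hk, Nat.choose_mul (n := n) h]
    congr 1
    have h1 : n - k - t ≤ n - t := by omega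
    have h2 : n - t - (n - k - t) = k := by omega
    rw [← Nat.choose_symm h1, h2]
  · rw [Nat.choose_eq_zero_of_lt (by omega : n - k < t), mul_zero]
    rcases le_or_gt t n with h1 | h1
    · rw [Nat.choose_eq_zero_of_lt (by omega : n - t < k), mul_zero]
    · rw [Nat.choose_eq_zero_of_lt h1, zero_mul]

theorem stmt2 (α i t : ℕ) (hi1 : 1 ≤ i) (hi2 : i ≤ 2 * α + 4)
    (ht1 : α + 3 - i ≤ t) (ht2 : t ≤ min (2 * α + 4 - i) (α + 2)) :
    ∑ s ∈ Finset.Icc (max 1 (i - (α + 2))) (min (α + 2) i),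
        Nat.choose (α + 2) s * Nat.choose (α + 2) (i - s) *
          Nat.choose (α + 2 + s - i) t
      = Nat.choose (α + 2) t * Nat.choose (2 * α + 4 - t) i := by
  set n := α + 2 with hn
  have htn : t ≤ n := by omega
  -- extend the sum to range (i+1)
  have hext : ∑ s ∈ Finset.Icc (max 1 (i - n)) (min n i),
      Nat.choose n s * Nat.choose n (i - s) * Nat.choose (n + s - i) t
      = ∑ s ∈ Finset.range (i + 1),
      Nat.choose n s * Nat.choose n (i - s) * Nat.choose (n + s - i) t := by
    apply Finset.sum_subset
    · intro x hx
      simp only [Finset.mem_Icc, Finset.mem_range] at hx ⊢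
      omega
    · intro x hx hx'
      simp only [Finset.mem_Icc, Finset.mem_range] at hx hx'
      rcases (by omega : n < x ∨ n < i - x ∨ x = 0) with h | h | h
      · rw [Nat.choose_eq_zero_of_lt h, zero_mul, zero_mul]
      · rw [Nat.choose_eq_zero_of_lt h, mul_zero, zero_mul]
      · subst h
        rcases le_or_gt i n with h1 | h1
        · have : n + 0 - i = n - i := by omega
          rw [this, Nat.choose_eq_zero_of_lt (by omega : n - i < t), mul_zero]
        · rw [Nat.choose_eq_zero_of_lt (by omega : n < i - 0), mul_zero, zero_mul]
  rw [hext]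
  -- Vandermonde on the RHS
  have h2 : 2 * α + 4 - t = n + (n - t) := by omega
  rw [h2, Nat.add_choose_eq n (n - t) i, Finset.Nat.sum_antidiagonal_eq_sum_range_succ_mk,
    Finset.mul_sum]
  apply Finset.sum_congr rfl
  intro s hs
  simp only [Finset.mem_range] at hs
  have hsi : s ≤ i := by omega
  rcases le_or_gt (i - s) n with h1 | h1
  · have : n + s - i = n - (i - s) := by omega
    rw [this, mul_assoc, aux_choose n (i - s) t h1]
    ring
  · rw [Nat.choose_eq_zero_of_lt h1, Nat.choose_eq_zero_of_lt (by omega : n - t < i - s),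
      mul_zero, zero_mul, mul_zero]
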